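/- Let V and W be finite-dimensional real normed vector spaces, let C ⊆ V × W be a convex cone (C is convex and t·C ⊆ C for every real t > 0), let q : V × W → W be the projection (v,w) ↦ w, and let ν ∈ W be nonzero. If there exists x ∈ V with (x, ν) in the intrinsic interior (relative interior) of C, then dim(C ∩ H_ν) + dim(q(C)) = dim C + 1, where H_ν := {(v, tν) : v ∈ V, t ∈ ℝ}. -/

import Mathlib

open Pointwise

/-- Equality case: if `C ⊆ V × W` is a convex cone, `ν ≠ 0`, and `(x, ν)` lies in the
intrinsic (relative) interior of `C` for some `x`, then with `H_ν := V × ℝν`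
one has `dim(C ∩ H_ν) + dim q(C) = dim C + 1`. -/
theorem stmt_4
    (V W : Type*) [NormedAddCommGroup V] [NormedSpace ℝ V] [FiniteDimensional ℝ V]
    [NormedAddCommGroup W] [NormedSpace ℝ W] [FiniteDimensional ℝ W]
    (C : Set (V × W))
    (hconv : Convex ℝ C)
    (hcone : ∀ t : ℝ, 0 < t → t • C ⊆ C)
    (ν : W) (hν : ν ≠ 0)
    (hint : ∃ x : V, (x, ν) ∈ intrinsicInterior ℝ C) :
    Module.finrank ℝ
        ↥(Submodule.span ℝ (C ∩ ((⊤ : Submodule ℝ V).prod (ℝ ∙ ν) : Set (V × W))))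
      + Module.finrank ℝ ↥(Submodule.span ℝ (Prod.snd '' C))
      = Module.finrank ℝ ↥(Submodule.span ℝ C) + 1 := by
  classical
  obtain ⟨x, hx⟩ := hint
  set z : V × W := (x, ν) with hz_def
  have hzC : z ∈ C := intrinsicInterior_subset hx
  set E := Submodule.span ℝ C with hE
  set Hs := (⊤ : Submodule ℝ V).prod (ℝ ∙ ν) with hHs
  set K := LinearMap.ker (LinearMap.snd ℝ V W) with hK
  set N := E ⊓ K with hN
  set M := E ⊓ Hs with hM
  have hzE : z ∈ E := Submodule.subset_span hzC
  have hzH : z ∈ Hs := Submodule.mem_prod.mpr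
    ⟨trivial, Submodule.mem_span_singleton_self ν⟩
  -- 0 is in the affine span of C
  have h0 : (0 : V × W) ∈ affineSpan ℝ C := by
    have h2 : (2 : ℝ) • z ∈ C := hcone 2 two_pos (Set.smul_mem_smul_set hzC)
    have := AffineSubspace.smul_vsub_vadd_mem (affineSpan ℝ C) (1 : ℝ)
      (subset_affineSpan ℝ C hzC) (subset_affineSpan ℝ C h2) (subset_affineSpan ℝ C hzC)
    simpa [two_smul] using this
  have hAS : (affineSpan ℝ C : Set (V × W)) = (E : Set (V × W)) := by
    rw [← affineSpan_insert_eq_affineSpan (k := ℝ) h0, affineSpan_insert_zero]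
  -- key: E ⊓ Hs ⊆ span (C ∩ Hs)
  have key : ∀ u : V × W, u ∈ E → u ∈ Hs →
      u ∈ Submodule.span ℝ (C ∩ (Hs : Set (V × W))) := by
    intro u huE huH
    rw [mem_intrinsicInterior] at hx
    obtain ⟨y, hy_int, hy_eq⟩ := hx
    obtain ⟨ε, hε, hball⟩ := Metric.mem_nhds_iff.mp (mem_interior_iff_mem_nhds.mp hy_int)
    rcases eq_or_ne u 0 with rfl | hu0
    · exact Submodule.zero_mem _
    have hnorm : 0 < ‖u‖ := norm_pos_iff.mpr hu0
    set δ : ℝ := ε / (2 * ‖u‖) with hδ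
    have hδpos : 0 < δ := by positivity
    have hmem : z + δ • u ∈ (affineSpan ℝ C : Set (V × W)) := by
      rw [hAS]; exact E.add_mem hzE (E.smul_mem _ huE)
    set w : affineSpan ℝ C := ⟨z + δ • u, hmem⟩
    have hδnorm : δ * ‖u‖ = ε / 2 := by
      field_simp [hδ]
      rw [hδ, div_mul_eq_mul_div, div_mul_eq_mul_div, div_eq_iff (by positivity)]; ring
    have hwball : w ∈ Metric.ball y ε := by
      rw [Metric.mem_ball, Subtype.dist_eq, hy_eq]
      show dist (z + δ • u) z < ε
      rw [dist_eq_norm, add_sub_cancel_left, norm_smul, Real.norm_eq_abs,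
        abs_of_pos hδpos, hδnorm]
      linarith
    have hwC : z + δ • u ∈ C := hball hwball
    have h1 : z + δ • u ∈ Submodule.span ℝ (C ∩ (Hs : Set (V × W))) :=
      Submodule.subset_span ⟨hwC, Hs.add_mem hzH (Hs.smul_mem _ huH)⟩
    have h2 : z ∈ Submodule.span ℝ (C ∩ (Hs : Set (V × W))) :=
      Submodule.subset_span ⟨hzC, hzH⟩
    have h3 : δ • u ∈ Submodule.span ℝ (C ∩ (Hs : Set (V × W))) := by
      have := Submodule.sub_mem _ h1 h2
      simpa using this
    have h4 := Submodule.smul_mem _ δ⁻¹ h3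
    rwa [smul_smul, inv_mul_cancel₀ hδpos.ne', one_smul] at h4
  have hspanM : Submodule.span ℝ (C ∩ (Hs : Set (V × W))) = M := by
    apply le_antisymm
    · rw [Submodule.span_le]
      rintro p ⟨hpC, hpH⟩
      exact Submodule.mem_inf.mpr ⟨Submodule.subset_span hpC, hpH⟩
    · rintro p hp
      rw [Submodule.mem_inf] at hp
      exact key p hp.1 hp.2
  have hz0 : z ≠ 0 := fun h => hν (congrArg Prod.snd h)
  -- M = N ⊔ span z
  have hMsup : M = N ⊔ (ℝ ∙ z) := by
    apply le_antisymm
    · rintro p hp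
      rw [Submodule.mem_inf] at hp
      obtain ⟨hpE, hpH⟩ := hp
      obtain ⟨-, hp2⟩ := Submodule.mem_prod.mp hpH
      obtain ⟨t, ht⟩ := Submodule.mem_span_singleton.mp hp2
      have hNmem : p - t • z ∈ N := by
        refine Submodule.mem_inf.mpr ⟨E.sub_mem hpE (E.smul_mem _ hzE), ?_⟩
        rw [hK, LinearMap.mem_ker]
        show p.2 - t • ν = 0
        rw [ht, sub_self]
      have hpe : p = (p - t • z) + t • z := by abel
      rw [hpe]
      exact Submodule.add_mem_sup hNmem
        (Submodule.smul_mem _ t (Submodule.mem_span_singleton_self z))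
    · refine sup_le ?_ ?_
      · refine inf_le_inf_left E ?_
        rintro p hp
        rw [hK, LinearMap.mem_ker] at hp
        refine Submodule.mem_prod.mpr ⟨trivial, ?_⟩
        show p.2 ∈ ℝ ∙ ν
        rw [show p.2 = 0 from hp]
        exact Submodule.zero_mem _
      · rw [Submodule.span_singleton_le_iff_mem]
        exact Submodule.mem_inf.mpr ⟨hzE, hzH⟩
  have hdisj : N ⊓ (ℝ ∙ z) = ⊥ := by
    rw [eq_bot_iff]
    rintro p hp
    rw [Submodule.mem_inf] at hp
    obtain ⟨hpN, hpz⟩ := hp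
    obtain ⟨t, rfl⟩ := Submodule.mem_span_singleton.mp hpz
    have h2 : (t • z).2 = 0 := by
      have := (Submodule.mem_inf.mp hpN).2
      rw [hK, LinearMap.mem_ker] at this
      exact this
    have ht : t = 0 := by
      have : t • ν = 0 := h2
      rcases smul_eq_zero.mp this with h | h
      · exact h
      · exact absurd h hν
    simp [ht]
  have hMrank : Module.finrank ℝ M = Module.finrank ℝ N + 1 := by
    have hsum := Submodule.finrank_sup_add_finrank_inf_eq N (ℝ ∙ z)
    rw [hdisj, finrank_bot, finrank_span_singleton hz0] at hsum
    rw [hMsup]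
    omega
  -- rank-nullity
  have hRN : Module.finrank ℝ (E.map (LinearMap.snd ℝ V W)) + Module.finrank ℝ N
      = Module.finrank ℝ E := by
    have hrn := LinearMap.finrank_range_add_finrank_ker ((LinearMap.snd ℝ V W).domRestrict E)
    rw [LinearMap.range_domRestrict] at hrn
    have hker : Module.finrank ℝ (LinearMap.ker ((LinearMap.snd ℝ V W).domRestrict E))
        = Module.finrank ℝ N := by
      rw [LinearMap.ker_domRestrict]
      have heq : Submodule.comap E.subtype K = Submodule.comap E.subtype (E ⊓ K) := by
        rw [Submodule.comap_inf, Submodule.comap_subtype_self, top_inf_eq]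
      rw [heq]
      exact (Submodule.comapSubtypeEquivOfLe inf_le_left).finrank_eq
    rw [hker] at hrn
    exact hrn
  have hmap : Submodule.span ℝ (Prod.snd '' C) = E.map (LinearMap.snd ℝ V W) := by
    rw [hE, Submodule.map_span]
    rfl
  rw [hspanM, hmap, hMrank]
  omega
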